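/- Let ρ be a probabilistic choice function and let C : [0,1]^n → ℝ be a copula. Then there exists a unique probability distribution π over choice types such that π(⊴ s) = C(P_1(s_1), P_2(s_2), …, P_n(s_n)) for every choice type s; moreover, this π represents ρ (each copula serves as an identification method producing a representation of any ordered probabilistic choice). -/
import Mathlib


open Finset

variable {n : ℕ} {S : Fin n → Type*} [∀ i, Fintype (S i)] [∀ i, LinearOrder (S i)]

/-- `ρ` is a probabilistic choice function: each `ρ i` is a probability distribution on `S i`. -/
def IsPCF (ρ : ∀ i, S i → ℝ) : Prop :=
  (∀ i (x : S i), 0 ≤ ρ i x) ∧ ∀ i, ∑ x : S i, ρ i x = 1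

/-- The cumulative choice function `P_i(x) = ∑_{y ≤ x} ρ_i(y)`. -/
noncomputable def cumul (ρ : ∀ i, S i → ℝ) (i : Fin n) (x : S i) : ℝ :=
  ∑ y ∈ Finset.univ.filter (fun y => y ≤ x), ρ i y

/-- `π` is a probability distribution over choice types. -/
def IsDist (π : (∀ i, S i) → ℝ) : Prop :=
  (∀ s, 0 ≤ π s) ∧ ∑ s : ∀ i, S i, π s = 1

/-- `π` represents `ρ`: the marginals of `π` agree with `ρ`. -/
def Represents (π : (∀ i, S i) → ℝ) (ρ : ∀ i, S i → ℝ) : Prop :=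
  ∀ i (x : S i), ∑ s ∈ Finset.univ.filter (fun s : ∀ i, S i => s i = x), π s = ρ i x

/-- `π(⊴ s)`: total mass on choice types componentwise below `s`. -/
noncomputable def cdfLe (π : (∀ i, S i) → ℝ) (s : ∀ i, S i) : ℝ :=
  ∑ t ∈ Finset.univ.filter (fun t : ∀ i, S i => ∀ i, t i ≤ s i), π t

/-- `C` is an `n`-dimensional copula on `[0,1]^n`: grounded, uniform margins,
and `n`-increasing (nonnegative volume of every hyperrectangle in `[0,1]^n`). -/
def IsCopula (C : (Fin n → ℝ) → ℝ) : Prop :=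
  (∀ u : Fin n → ℝ, (∀ i, 0 ≤ u i ∧ u i ≤ 1) → (∃ i, u i = 0) → C u = 0) ∧
  (∀ u : Fin n → ℝ, (∀ i, 0 ≤ u i ∧ u i ≤ 1) → ∀ i, (∀ j, j ≠ i → u j = 1) → C u = u i) ∧
  (∀ a b : Fin n → ℝ, (∀ i, 0 ≤ a i ∧ a i ≤ 1) → (∀ i, 0 ≤ b i ∧ b i ≤ 1) →
    (∀ i, a i ≤ b i) →
    0 ≤ ∑ A : Finset (Fin n), (-1 : ℝ) ^ A.card * C (fun i => if i ∈ A then a i else b i))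


/-! ### Auxiliary machinery -/

theorem telescope1 {α : Type*} [Fintype α] [LinearOrder α] (w : α → ℝ) (f : ℝ → ℝ) (x : α) :
    ∑ y ∈ Finset.univ.filter (fun y => y ≤ x),
      (f (∑ z ∈ Finset.univ.filter (fun z => z ≤ y), w z) -
       f (∑ z ∈ Finset.univ.filter (fun z => z < y), w z)) =
    f (∑ z ∈ Finset.univ.filter (fun z => z ≤ x), w z) - f 0 := by
  induction x using WellFoundedLT.induction with
  | _ x ih =>
    have hsplit : Finset.univ.filter (fun y => y ≤ x)
        = insert x (Finset.univ.filter (fun y => y < x)) := by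
      ext y; simp [le_iff_lt_or_eq]; tauto
    have hx : x ∉ Finset.univ.filter (fun y : α => y < x) := by simp
    rw [hsplit, Finset.sum_insert hx]
    have hlt : ∑ y ∈ Finset.univ.filter (fun y => y < x),
        (f (∑ z ∈ Finset.univ.filter (fun z => z ≤ y), w z) -
         f (∑ z ∈ Finset.univ.filter (fun z => z < y), w z))
        = f (∑ z ∈ Finset.univ.filter (fun z => z < x), w z) - f 0 := by
      rcases eq_or_ne (Finset.univ.filter (fun y : α => y < x)) ∅ with he | hne
      · rw [he]; simp
      · have hne' : (Finset.univ.filter (fun y : α => y < x)).Nonempty :=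
          Finset.nonempty_iff_ne_empty.mpr hne
        set x' := (Finset.univ.filter (fun y : α => y < x)).max' hne' with hx'
        have hx'lt : x' < x := by
          have hm := Finset.max'_mem _ hne'
          exact (Finset.mem_filter.mp hm).2
        have hset : Finset.univ.filter (fun y : α => y < x)
            = Finset.univ.filter (fun y : α => y ≤ x') := by
          ext y
          simp only [Finset.mem_filter, Finset.mem_univ, true_and]
          constructor
          · intro hy; exact Finset.le_max' _ y (by simp [hy])
          · intro hy; exact lt_of_le_of_lt hy hx'lt
        rw [hset]
        exact ih x' hx'lt
    rw [hlt]; rw [hsplit]; ring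

theorem cumul_inj1 {α : Type*} [Fintype α] [LinearOrder α] (g h : α → ℝ)
    (H : ∀ x, ∑ y ∈ Finset.univ.filter (fun y => y ≤ x), g y
        = ∑ y ∈ Finset.univ.filter (fun y => y ≤ x), h y) :
    ∀ x, g x = h x := by
  intro x
  induction x using WellFoundedLT.induction with
  | _ x ih =>
    have hsplit : Finset.univ.filter (fun y => y ≤ x)
        = insert x (Finset.univ.filter (fun y => y < x)) := by
      ext y; simp [le_iff_lt_or_eq]; tauto
    have hx : x ∉ Finset.univ.filter (fun y : α => y < x) := by simp
    have H' := H x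
    rw [hsplit, Finset.sum_insert hx, Finset.sum_insert hx] at H'
    have heq : ∑ y ∈ Finset.univ.filter (fun y : α => y < x), g y
        = ∑ y ∈ Finset.univ.filter (fun y : α => y < x), h y := by
      apply Finset.sum_congr rfl
      intro y hy
      exact ih y (Finset.mem_filter.mp hy).2
    linarith

/-- `P⁻_i(x) = ∑_{y < x} ρ_i(y)`. -/
noncomputable def cumulLt (ρ : ∀ i, S i → ℝ) (i : Fin n) (x : S i) : ℝ :=
  ∑ y ∈ Finset.univ.filter (fun y => y < x), ρ i y

/-- The corner function used in the inclusion–exclusion formula. -/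
noncomputable def vfun (ρ : ∀ i, S i → ℝ) (A : Finset (Fin n)) (t : ∀ i, S i) : Fin n → ℝ :=
  fun i => if i ∈ A then cumulLt ρ i (t i) else cumul ρ i (t i)

/-- The candidate distribution, defined by inclusion–exclusion. -/
noncomputable def piDist (ρ : ∀ i, S i → ℝ) (C : (Fin n → ℝ) → ℝ) (t : ∀ i, S i) : ℝ :=
  ∑ A : Finset (Fin n), (-1 : ℝ) ^ A.card * C (vfun ρ A t)

theorem cumulLt_nonneg (ρ : ∀ i, S i → ℝ) (hρ : IsPCF ρ) (i : Fin n) (x : S i) :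
    0 ≤ cumulLt ρ i x :=
  Finset.sum_nonneg fun y _ => hρ.1 i y

theorem cumulLt_le_cumul (ρ : ∀ i, S i → ℝ) (hρ : IsPCF ρ) (i : Fin n) (x : S i) :
    cumulLt ρ i x ≤ cumul ρ i x := by
  apply Finset.sum_le_sum_of_subset_of_nonneg
  · intro y hy
    simp only [Finset.mem_filter, Finset.mem_univ, true_and] at hy ⊢
    exact le_of_lt hy
  · exact fun y _ _ => hρ.1 i y

theorem cumul_nonneg (ρ : ∀ i, S i → ℝ) (hρ : IsPCF ρ) (i : Fin n) (x : S i) :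
    0 ≤ cumul ρ i x :=
  Finset.sum_nonneg fun y _ => hρ.1 i y

theorem cumul_le_one (ρ : ∀ i, S i → ℝ) (hρ : IsPCF ρ) (i : Fin n) (x : S i) :
    cumul ρ i x ≤ 1 := by
  rw [← hρ.2 i]
  apply Finset.sum_le_sum_of_subset_of_nonneg (Finset.filter_subset _ _)
  exact fun y _ _ => hρ.1 i y

theorem vfun_bounds (ρ : ∀ i, S i → ℝ) (hρ : IsPCF ρ) (A : Finset (Fin n)) (t : ∀ i, S i) :
    ∀ i, 0 ≤ vfun ρ A t i ∧ vfun ρ A t i ≤ 1 := by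
  intro i
  unfold vfun
  by_cases h : i ∈ A <;> simp only [h, if_true, if_false]
  · exact ⟨cumulLt_nonneg ρ hρ i _, le_trans (cumulLt_le_cumul ρ hρ i _) (cumul_le_one ρ hρ i _)⟩
  · exact ⟨cumul_nonneg ρ hρ i _, cumul_le_one ρ hρ i _⟩

theorem key_telescope (ρ : ∀ i, S i → ℝ) (hρ : IsPCF ρ) (C : (Fin n → ℝ) → ℝ) (hC : IsCopula C)
    (K : Finset (Fin n)) (s : ∀ i, S i) :
    ∑ t ∈ Fintype.piFinset
        (fun i => if i ∈ K then Finset.univ.filter (fun y => y ≤ s i) else {s i}),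
      ∑ A ∈ K.powerset, (-1 : ℝ) ^ A.card * C (vfun ρ A t)
    = C (fun i => cumul ρ i (s i)) := by
  induction K using Finset.induction_on with
  | empty =>
      simp only [Finset.notMem_empty, if_false, Fintype.piFinset_singleton,
        Finset.powerset_empty, Finset.sum_singleton, Finset.card_empty, pow_zero, one_mul]
      have hv : vfun ρ (∅ : Finset (Fin n)) s = fun i => cumul ρ i (s i) := by
        funext i; simp [vfun]
      rw [hv]
  | @insert j K hj ih =>
      have hbij : ∀ g : (∀ i, S i) → ℝ,
          ∑ t ∈ Fintype.piFinset
            (fun i => if i ∈ insert j K then Finset.univ.filter (fun y => y ≤ s i) else {s i}),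
            g t
          = ∑ y ∈ Finset.univ.filter (fun y => y ≤ s j),
              ∑ t' ∈ Fintype.piFinset
                (fun i => if i ∈ K then Finset.univ.filter (fun y => y ≤ s i) else {s i}),
                g (Function.update t' j y) := by
        intro g
        rw [← Finset.sum_product']
        refine Finset.sum_nbij' (fun t => (t j, Function.update t j (s j)))
          (fun p => Function.update p.2 j p.1) ?_ ?_ ?_ ?_ ?_
        · intro t ht
          rw [Fintype.mem_piFinset] at ht
          refine Finset.mem_product.mpr ⟨?_, ?_⟩
          · have h1 := ht j
            simpa using h1
          · rw [Fintype.mem_piFinset]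
            intro i
            by_cases hij : i = j
            · subst hij
              simp [hj]
            · have h1 := ht i
              simp only [Finset.mem_insert, hij, false_or] at h1
              simpa [Function.update_of_ne hij] using h1
        · intro p hp
          obtain ⟨hp1, hp2⟩ := Finset.mem_product.mp hp
          rw [Fintype.mem_piFinset] at hp2 ⊢
          intro i
          by_cases hij : i = j
          · subst hij
            simpa using hp1
          · have h1 := hp2 i
            simp only [hij, if_neg, Function.update_of_ne hij] at h1 ⊢
            simp only [Finset.mem_insert, hij, false_or]
            exact h1
        · intro t ht
          rw [Fintype.mem_piFinset] at ht
          funext i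
          by_cases hij : i = j
          · subst hij; simp
          · simp [Function.update_of_ne hij]
        · rintro ⟨y, t'⟩ hp
          obtain ⟨hp1, hp2⟩ := Finset.mem_product.mp hp
          rw [Fintype.mem_piFinset] at hp2
          have hpj : t' j = s j := by
            have := hp2 j
            simpa [hj] using this
          simp only [Prod.mk.injEq]
          constructor
          · simp
          · funext i
            by_cases hij : i = j
            · subst hij; simp [hpj]
            · simp [Function.update_of_ne hij]
        · intro t ht
          congr 1
          funext i
          by_cases hij : i = j
          · subst hij; simp
          · simp [Function.update_of_ne hij]
      rw [hbij]
      rw [Finset.sum_comm]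
      have hstep : ∀ t' ∈ Fintype.piFinset
          (fun i => if i ∈ K then Finset.univ.filter (fun y => y ≤ s i) else {s i}),
          ∑ y ∈ Finset.univ.filter (fun y => y ≤ s j),
            ∑ A ∈ (insert j K).powerset,
              (-1:ℝ)^A.card * C (vfun ρ A (Function.update t' j y))
          = ∑ A ∈ K.powerset, (-1:ℝ)^A.card * C (vfun ρ A t') := by
        intro t' ht'
        have ht'j : t' j = s j := by
          have := Fintype.mem_piFinset.mp ht' j
          simpa [hj] using this
        have hsum : ∀ y : S j, ∑ A ∈ (insert j K).powerset,
              (-1:ℝ)^A.card * C (vfun ρ A (Function.update t' j y))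
            = ∑ A ∈ K.powerset, ((-1:ℝ)^A.card * C (vfun ρ A (Function.update t' j y))
                + (-1:ℝ)^(insert j A).card * C (vfun ρ (insert j A) (Function.update t' j y))) := by
          intro y
          rw [Finset.sum_powerset_insert hj, ← Finset.sum_add_distrib]
        simp only [hsum]
        rw [Finset.sum_comm]
        refine Finset.sum_congr rfl fun A hA => ?_
        have hjA : j ∉ A := fun hmem => hj (Finset.mem_powerset.mp hA hmem)
        have hcard : ((insert j A).card : ℕ) = A.card + 1 := Finset.card_insert_of_notMem hjA
        have hv1 : ∀ y : S j, vfun ρ A (Function.update t' j y)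
            = Function.update (vfun ρ A t') j (cumul ρ j y) := by
          intro y; funext i
          by_cases hij : i = j
          · subst hij; simp [vfun, hjA]
          · simp [vfun, Function.update_of_ne hij]
        have hv2 : ∀ y : S j, vfun ρ (insert j A) (Function.update t' j y)
            = Function.update (vfun ρ A t') j (cumulLt ρ j y) := by
          intro y; funext i
          by_cases hij : i = j
          · subst hij; simp [vfun]
          · simp [vfun, Function.update_of_ne hij, hij]
        have htel := telescope1 (ρ j) (fun u => C (Function.update (vfun ρ A t') j u)) (s j)
        have hzero : C (Function.update (vfun ρ A t') j 0) = 0 := by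
          apply hC.1
          · intro i
            by_cases hij : i = j
            · subst hij; rw [Function.update_self]; norm_num
            · rw [Function.update_of_ne hij]; exact vfun_bounds ρ hρ A t' i
          · exact ⟨j, by simp⟩
        have hself : Function.update (vfun ρ A t') j (cumul ρ j (s j)) = vfun ρ A t' := by
          funext i
          by_cases hij : i = j
          · subst hij; simp [vfun, hjA, ht'j]
          · simp [Function.update_of_ne hij]
        calc ∑ y ∈ Finset.univ.filter (fun y => y ≤ s j),
              ((-1:ℝ)^A.card * C (vfun ρ A (Function.update t' j y))
                + (-1:ℝ)^(insert j A).card * C (vfun ρ (insert j A) (Function.update t' j y)))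
            = ∑ y ∈ Finset.univ.filter (fun y => y ≤ s j),
              ((-1:ℝ)^A.card) * (C (Function.update (vfun ρ A t') j (cumul ρ j y))
                - C (Function.update (vfun ρ A t') j (cumulLt ρ j y))) := by
              refine Finset.sum_congr rfl fun y _ => ?_
              rw [hv1 y, hv2 y, hcard, pow_succ]
              ring
          _ = (-1:ℝ)^A.card * ∑ y ∈ Finset.univ.filter (fun y => y ≤ s j),
              (C (Function.update (vfun ρ A t') j (cumul ρ j y))
                - C (Function.update (vfun ρ A t') j (cumulLt ρ j y))) := by
              rw [Finset.mul_sum]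
          _ = (-1:ℝ)^A.card * C (vfun ρ A t') := by
              have hts : ∑ y ∈ Finset.univ.filter (fun y => y ≤ s j),
                  (C (Function.update (vfun ρ A t') j (cumul ρ j y))
                    - C (Function.update (vfun ρ A t') j (cumulLt ρ j y)))
                  = C (Function.update (vfun ρ A t') j (cumul ρ j (s j)))
                    - C (Function.update (vfun ρ A t') j 0) := by
                simpa [cumul, cumulLt] using htel
              rw [hts, hzero, hself]; ring
      rw [Finset.sum_congr rfl hstep]
      exact ih

/-- rank of a choice type, used for well-founded recursion in the product order -/
def rankPi (t : ∀ i, S i) : ℕ :=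
  ∑ i, (Finset.univ.filter (fun y => y < t i)).card

theorem rankPi_lt (t s : ∀ i, S i) (hle : ∀ i, t i ≤ s i) (hne : t ≠ s) :
    rankPi t < rankPi s := by
  obtain ⟨i, hi⟩ := Function.ne_iff.mp hne
  have hti : t i < s i := lt_of_le_of_ne (hle i) hi
  apply Finset.sum_lt_sum
  · intro j _
    apply Finset.card_le_card
    intro y hy
    simp only [Finset.mem_filter, Finset.mem_univ, true_and] at hy ⊢
    exact lt_of_lt_of_le hy (hle j)
  · refine ⟨i, Finset.mem_univ i, ?_⟩
    have hsub : Finset.univ.filter (fun y => y < t i) ⊆ Finset.univ.filter (fun y => y < s i) := by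
      intro y hy
      simp only [Finset.mem_filter, Finset.mem_univ, true_and] at hy ⊢
      exact lt_of_lt_of_le hy (hle i)
    apply Finset.card_lt_card
    rw [Finset.ssubset_iff_of_subset hsub]
    exact ⟨t i, by simp [hti], by simp⟩

theorem cdfLe_injective (π π' : (∀ i, S i) → ℝ) (h : ∀ s, cdfLe π s = cdfLe π' s) :
    π = π' := by
  have main : ∀ N (s : ∀ i, S i), rankPi s < N → π s = π' s := by
    intro N
    induction N with
    | zero => intro s hs; omega
    | succ N ih =>
      intro s hs
      have hins : Finset.univ.filter (fun t : ∀ i, S i => ∀ i, t i ≤ s i)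
          = insert s (Finset.univ.filter (fun t : ∀ i, S i => (∀ i, t i ≤ s i) ∧ t ≠ s)) := by
        ext t
        simp only [Finset.mem_filter, Finset.mem_univ, true_and, Finset.mem_insert]
        constructor
        · intro h1
          by_cases hts : t = s
          · exact Or.inl hts
          · exact Or.inr ⟨h1, hts⟩
        · rintro (rfl | ⟨h1, _⟩)
          · intro i; exact le_refl _
          · exact h1
      have hnm : s ∉ Finset.univ.filter (fun t : ∀ i, S i => (∀ i, t i ≤ s i) ∧ t ≠ s) := by
        simp
      have h1 := h s
      unfold cdfLe at h1
      rw [hins, Finset.sum_insert hnm, Finset.sum_insert hnm] at h1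
      have h2 : ∑ t ∈ Finset.univ.filter (fun t : ∀ i, S i => (∀ i, t i ≤ s i) ∧ t ≠ s), π t
          = ∑ t ∈ Finset.univ.filter (fun t : ∀ i, S i => (∀ i, t i ≤ s i) ∧ t ≠ s), π' t := by
        refine Finset.sum_congr rfl fun t ht => ?_
        obtain ⟨hle, hne⟩ := (Finset.mem_filter.mp ht).2
        exact ih t (lt_of_lt_of_le (rankPi_lt t s hle hne) (Nat.lt_succ_iff.mp hs))
      linarith
  funext s
  exact main (rankPi s + 1) s (Nat.lt_succ_self _)

theorem cdfLe_piDist (ρ : ∀ i, S i → ℝ) (hρ : IsPCF ρ)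
    (C : (Fin n → ℝ) → ℝ) (hC : IsCopula C) (s : ∀ i, S i) :
    cdfLe (piDist ρ C) s = C (fun i => cumul ρ i (s i)) := by
  have hk := key_telescope ρ hρ C hC Finset.univ s
  have hpi : (Fintype.piFinset (fun i => if i ∈ (Finset.univ : Finset (Fin n))
      then Finset.univ.filter (fun y => y ≤ s i) else {s i}))
      = Fintype.piFinset (fun i => Finset.univ.filter (fun y => y ≤ s i)) := by
    congr 1
    funext i
    simp
  rw [hpi, Finset.powerset_univ] at hk
  unfold cdfLe
  have hfil : Finset.univ.filter (fun t : ∀ i, S i => ∀ i, t i ≤ s i)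
      = Fintype.piFinset (fun i => Finset.univ.filter (fun y => y ≤ s i)) := by
    ext t; simp [Fintype.mem_piFinset]
  rw [hfil]
  exact hk

/-- every copula is an identification method: applying `C` to the marginal
cumulative choice functions of a pcf `ρ` determines a unique probability distribution over
choice types, and this distribution represents `ρ`. -/
theorem copula_identification_method (hn : 0 < n) [∀ i, Nonempty (S i)]
    (ρ : ∀ i, S i → ℝ) (hρ : IsPCF ρ)
    (C : (Fin n → ℝ) → ℝ) (hC : IsCopula C) :
    (∃! π : (∀ i, S i) → ℝ, IsDist π ∧
        ∀ s : ∀ i, S i, cdfLe π s = C (fun i => cumul ρ i (s i))) ∧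
    ∀ π : (∀ i, S i) → ℝ, IsDist π →
      (∀ s : ∀ i, S i, cdfLe π s = C (fun i => cumul ρ i (s i))) →
      Represents π ρ := by
  classical
  have htop : ∀ i : Fin n, ∃ m : S i, ∀ y : S i, y ≤ m := fun i =>
    ⟨(Finset.univ : Finset (S i)).max' Finset.univ_nonempty,
      fun y => Finset.le_max' _ y (Finset.mem_univ y)⟩
  choose top htop using htop
  have hcumtop : ∀ i, cumul ρ i (top i) = 1 := by
    intro i
    unfold cumul
    rw [Finset.filter_true_of_mem (fun y _ => htop i y), hρ.2 i]
  have hbnd : ∀ s : ∀ i, S i, ∀ j, 0 ≤ cumul ρ j (s j) ∧ cumul ρ j (s j) ≤ 1 :=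
    fun s j => ⟨cumul_nonneg ρ hρ j _, cumul_le_one ρ hρ j _⟩
  -- the candidate distribution
  have hcdf : ∀ s, cdfLe (piDist ρ C) s = C (fun i => cumul ρ i (s i)) :=
    cdfLe_piDist ρ hρ C hC
  have hnonneg : ∀ t, 0 ≤ piDist ρ C t := by
    intro t
    exact hC.2.2 (fun i => cumulLt ρ i (t i)) (fun i => cumul ρ i (t i))
      (fun i => ⟨cumulLt_nonneg ρ hρ i _,
        le_trans (cumulLt_le_cumul ρ hρ i _) (cumul_le_one ρ hρ i _)⟩)
      (fun i => ⟨cumul_nonneg ρ hρ i _, cumul_le_one ρ hρ i _⟩)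
      (fun i => cumulLt_le_cumul ρ hρ i _)
  have hsum1 : ∑ t : ∀ i, S i, piDist ρ C t = 1 := by
    have h1 : ∑ t : ∀ i, S i, piDist ρ C t = cdfLe (piDist ρ C) top := by
      unfold cdfLe
      rw [Finset.filter_true_of_mem (fun t _ => fun i => htop i (t i))]
    rw [h1, hcdf top]
    have h2 : (fun i => cumul ρ i (top i)) = fun _ => (1 : ℝ) := by
      funext i; exact hcumtop i
    rw [h2]
    have h3 := hC.2.1 (fun _ => (1 : ℝ)) (fun i => by norm_num) ⟨0, hn⟩
      (fun j _ => rfl)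
    simpa using h3
  have hdist : IsDist (piDist ρ C) := ⟨hnonneg, hsum1⟩
  refine ⟨⟨piDist ρ C, ⟨hdist, hcdf⟩, ?_⟩, ?_⟩
  · rintro π' ⟨_, hc⟩
    exact cdfLe_injective π' (piDist ρ C) (fun s => (hc s).trans (hcdf s).symm)
  · intro π _ hπc i x
    refine cumul_inj1 (fun y => ∑ s ∈ Finset.univ.filter (fun s : ∀ i, S i => s i = y), π s)
      (ρ i) ?_ x
    intro z
    have hfib := Finset.sum_fiberwise_eq_sum_filter Finset.univ
      (Finset.univ.filter (fun y : S i => y ≤ z)) (fun s : ∀ i, S i => s i) π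
    rw [hfib]
    have hsetEq : Finset.univ.filter
        (fun s : ∀ i, S i => s i ∈ Finset.univ.filter (fun y : S i => y ≤ z))
        = Finset.univ.filter (fun t : ∀ i, S i => ∀ j, t j ≤ Function.update top i z j) := by
      ext t
      simp only [Finset.mem_filter, Finset.mem_univ, true_and]
      constructor
      · intro h j
        by_cases hji : j = i
        · subst hji; rwa [Function.update_self]
        · rw [Function.update_of_ne hji]; exact htop j (t j)
      · intro h
        have := h i
        rwa [Function.update_self] at this
    rw [hsetEq]
    have hcz := hπc (Function.update top i z)
    unfold cdfLe at hcz
    rw [hcz]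
    have hm := hC.2.1 (fun j => cumul ρ j (Function.update top i z j))
      (hbnd (Function.update top i z)) i
      (fun j hji => by
        show cumul ρ j (Function.update top i z j) = 1
        rw [Function.update_of_ne hji]; exact hcumtop j)
    rw [hm]
    show cumul ρ i (Function.update top i z i) = _
    rw [Function.update_self]
    rfl
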